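/- Let G : ℝ^k → ℝ^n be any function, fix z* ∈ ℝ^k, and suppose y = A G(z*) + η where A ∈ ℝ^{m×n} is any random matrix and η ∈ ℝ^m has i.i.d. entries with mean zero and variance σ², independent of A. Partition [m] into M batches B₁,…,B_M each of size b = m/M, and define ℓ_j(z) = (1/b)·‖A_{B_j}G(z) − y_{B_j}‖². There exists a universal constant c > 0 such that with probability at least 1 − exp(−c·M), min_{z ∈ ℝ^k} max_{z' ∈ ℝ^k} median_{1 ≤ j ≤ M} (ℓ_j(z) − ℓ_j(z')) ≤ 4σ². -/

import Mathlib

open MeasureTheory ProbabilityTheory Real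

noncomputable section

/-- Euclidean dot product on `Fin n → ℝ`. -/
def dotp {n : ℕ} (x y : Fin n → ℝ) : ℝ := ∑ i, x i * y i

/-- Squared Euclidean norm on `Fin n → ℝ`. -/
def euclNormSq {n : ℕ} (x : Fin n → ℝ) : ℝ := ∑ i, x i ^ 2

/-- Euclidean norm on `Fin n → ℝ`. -/
def euclNorm {n : ℕ} (x : Fin n → ℝ) : ℝ := Real.sqrt (euclNormSq x)

/-- A random vector is isotropic if `E[a aᵀ] = I`. -/
def IsIsotropic {Ω : Type*} [MeasurableSpace Ω] (μ : Measure Ω) {n : ℕ}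
    (a : Ω → Fin n → ℝ) : Prop :=
  ∀ i j : Fin n, ∫ ω, a ω i * a ω j ∂μ = if i = j then 1 else 0

/-- A random vector is `C`-heavy-tailed if all its one-dimensional marginals have fourth
moments bounded in terms of second moments: `(E⟨a,u⟩⁴)^(1/4) ≤ C (E⟨a,u⟩²)^(1/2)`. -/
def IsHeavyTailed {Ω : Type*} [MeasurableSpace Ω] (μ : Measure Ω) {n : ℕ}
    (C : ℝ) (a : Ω → Fin n → ℝ) : Prop :=
  (∀ u : Fin n → ℝ, Integrable (fun ω => (dotp (a ω) u) ^ 4) μ) ∧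
  ∀ u : Fin n → ℝ,
    (∫ ω, (dotp (a ω) u) ^ 4 ∂μ) ^ ((1 : ℝ)/4) ≤ C * (∫ ω, (dotp (a ω) u) ^ 2 ∂μ) ^ ((1 : ℝ)/2)

/-- The (lower) median of a finite tuple of reals: the least `t` such that at least `⌈M/2⌉`
of the entries are `≤ t`. -/
def vecMedian {M : ℕ} (v : Fin M → ℝ) : ℝ :=
  sInf {t : ℝ | (M + 1) / 2 ≤ (Finset.univ.filter (fun j => v j ≤ t)).card}

/-- (\Cref{lemma: obj min value}.) Let `G : ℝ^k → ℝ^n` be any function,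
`z*` fixed, and `y = A G(z*) + η` where `A` is any random matrix (rows indexed by
`Fin M × Fin b`, batch `j` being the rows `(j, ·)`) and `η` has i.i.d. mean-zero
variance-`σ²` entries independent of `A`. With `ℓ_j(z) = (1/b)‖A_{B_j} G(z) - y_{B_j}‖²`,
there is a universal constant `c > 0` such that with probability at least `1 - exp(-c M)`,
`min_z max_{z'} median_j (ℓ_j(z) - ℓ_j(z')) ≤ 4σ²`. -/
lemma aux_vecMedian_le {M : ℕ} (v : Fin M → ℝ) (t : ℝ) (ht : 0 ≤ t)
    (h : (M + 1) / 2 ≤ (Finset.univ.filter (fun j => v j ≤ t)).card) :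
    vecMedian v ≤ t := by
  by_cases hb : BddBelow {s : ℝ | (M + 1) / 2 ≤ (Finset.univ.filter (fun j => v j ≤ s)).card}
  · exact csInf_le hb h
  · rw [vecMedian, Real.sInf_of_not_bddBelow hb]; exact ht

lemma aux_vecMedian_zero_nonneg {M : ℕ} : 0 ≤ vecMedian (fun _ : Fin M => (0:ℝ)) := by
  rcases Nat.eq_zero_or_pos M with hM | hM
  · subst hM
    have : ¬ BddBelow {t : ℝ | (0 + 1) / 2 ≤ (Finset.univ.filter
        (fun j : Fin 0 => (0:ℝ) ≤ t)).card} := by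
      intro ⟨x, hx⟩
      have h1 := hx (a := x - 1) (by simp)
      simp at h1; linarith
    rw [vecMedian, Real.sInf_of_not_bddBelow this]
  · apply Real.sInf_nonneg
    intro x hx
    simp only [Set.mem_setOf_eq] at hx
    by_contra hneg
    push_neg at hneg
    have : (Finset.univ.filter (fun _ : Fin M => (0:ℝ) ≤ x)) = ∅ := by
      apply Finset.filter_false_of_mem; intro j _; linarith
    rw [this] at hx
    simp at hx
    omega

theorem mom_objective_min_value :
    ∃ c : ℝ, 0 < c ∧
      ∀ (Ω : Type) (_ : MeasurableSpace Ω) (μ : Measure Ω), IsProbabilityMeasure μ →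
      ∀ (k n M b : ℕ) (σ : ℝ) (G : (Fin k → ℝ) → (Fin n → ℝ)) (zstar : Fin k → ℝ)
        (a : Fin M × Fin b → Ω → Fin n → ℝ)
        (η : Fin M × Fin b → Ω → ℝ) (η₀ : Ω → ℝ) (y : Fin M × Fin b → Ω → ℝ),
        (∀ i, Measurable (a i)) → (∀ i, Measurable (η i)) →
        iIndepFun η μ →
        (∀ i, IdentDistrib (η i) η₀ μ μ) →
        Integrable η₀ μ → Integrable (fun ω => (η₀ ω) ^ 2) μ →
        (∫ ω, η₀ ω ∂μ) = 0 → (∫ ω, (η₀ ω) ^ 2 ∂μ) = σ ^ 2 →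
        IndepFun (fun ω i => a i ω) (fun ω i => η i ω) μ →
        (∀ i ω, y i ω = dotp (a i ω) (G zstar) + η i ω) →
        1 - ENNReal.ofReal (Real.exp (-(c * M))) ≤
          μ {ω |
            (⨅ z : Fin k → ℝ, ⨆ z' : Fin k → ℝ,
              vecMedian (fun j : Fin M =>
                (1 / (b : ℝ)) * ∑ i : Fin b, (dotp (a (j, i) ω) (G z) - y (j, i) ω) ^ 2 -
                (1 / (b : ℝ)) * ∑ i : Fin b, (dotp (a (j, i) ω) (G z') - y (j, i) ω) ^ 2)) ≤
              4 * σ ^ 2} := by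
  classical
  refine ⟨Real.log (8/7), Real.log_pos (by norm_num), ?_⟩
  intro Ω mΩ μ hμ k n M b σ G zstar a η η₀ y ha hη hηindep hid hη₀int hη₀sq hmean hvar hAη hy
  set c : ℝ := Real.log (8/7) with hc
  -- basic objects
  set X : Fin M → Ω → ℝ := fun j ω => (1 / (b : ℝ)) * ∑ i : Fin b, (η (j, i) ω) ^ 2 with hX
  set Y : Fin M → Ω → ℝ := fun j ω => if X j ω ≤ 4 * σ ^ 2 then 0 else 1 with hY
  set E : Set Ω :=
    {ω | (M + 1) / 2 ≤ (Finset.univ.filter (fun j => X j ω ≤ 4 * σ ^ 2)).card} with hE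
  set T : Set Ω := {ω |
            (⨅ z : Fin k → ℝ, ⨆ z' : Fin k → ℝ,
              vecMedian (fun j : Fin M =>
                (1 / (b : ℝ)) * ∑ i : Fin b, (dotp (a (j, i) ω) (G z) - y (j, i) ω) ^ 2 -
                (1 / (b : ℝ)) * ∑ i : Fin b, (dotp (a (j, i) ω) (G z') - y (j, i) ω) ^ 2)) ≤
              4 * σ ^ 2} with hT
  have hσ2 : 0 ≤ σ ^ 2 := sq_nonneg σ
  have hXmeas : ∀ j, Measurable (X j) := by
    intro j
    exact measurable_const.mul (Finset.measurable_sum _ fun i _ => (hη (j, i)).pow_const 2)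
  have hbadmeas : ∀ j, MeasurableSet {ω | ¬ (X j ω ≤ 4 * σ ^ 2)} :=
    fun j => (measurableSet_le (hXmeas j) measurable_const).compl
  have hYmeas : ∀ j, Measurable (Y j) := by
    intro j
    exact Measurable.ite (measurableSet_le (hXmeas j) measurable_const)
      measurable_const measurable_const
  -- Part 1 : E ⊆ T
  have hsub : E ⊆ T := by
    intro ω hω
    simp only [hE, Set.mem_setOf_eq] at hω
    set ℓ : (Fin k → ℝ) → Fin M → ℝ := fun z j =>
      (1 / (b : ℝ)) * ∑ i : Fin b, (dotp (a (j, i) ω) (G z) - y (j, i) ω) ^ 2 with hℓ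
    have hℓnonneg : ∀ z j, 0 ≤ ℓ z j := by
      intro z j
      apply mul_nonneg (by positivity)
      exact Finset.sum_nonneg fun i _ => sq_nonneg _
    have hℓstar : ∀ j, ℓ zstar j = X j ω := by
      intro j
      simp only [hℓ, hX]
      congr 1
      apply Finset.sum_congr rfl
      intro i _
      rw [hy (j, i) ω]; ring
    have h0 : ∀ z : Fin k → ℝ, 0 ≤ ⨆ z' : Fin k → ℝ,
        vecMedian (fun j : Fin M => ℓ z j - ℓ z' j) := by
      intro z
      refine Real.iSup_nonneg' ⟨z, ?_⟩
      have : (fun j : Fin M => ℓ z j - ℓ z j) = fun _ => (0:ℝ) := by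
        funext j; ring
      rw [this]
      exact aux_vecMedian_zero_nonneg
    have hbdd : BddBelow (Set.range fun z : Fin k → ℝ => ⨆ z' : Fin k → ℝ,
        vecMedian (fun j : Fin M => ℓ z j - ℓ z' j)) := by
      refine ⟨0, ?_⟩
      rintro x ⟨z, rfl⟩
      exact h0 z
    have hsup : (⨆ z' : Fin k → ℝ, vecMedian (fun j : Fin M => ℓ zstar j - ℓ z' j))
        ≤ 4 * σ ^ 2 := by
      refine ciSup_le fun z' => ?_
      refine aux_vecMedian_le _ _ (by positivity) ?_
      refine le_trans hω (Finset.card_le_card ?_)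
      intro j hj
      simp only [Finset.mem_filter, Finset.mem_univ, true_and] at hj ⊢
      have := hℓnonneg z' j
      rw [hℓstar j] at *
      linarith
    show (⨅ z : Fin k → ℝ, ⨆ z' : Fin k → ℝ,
        vecMedian (fun j : Fin M => ℓ z j - ℓ z' j)) ≤ 4 * σ ^ 2
    exact le_trans (ciInf_le hbdd zstar) hsup
  -- integrability and expectation of X j
  have hsqid : ∀ i : Fin M × Fin b,
      IdentDistrib (fun ω => (η i ω) ^ 2) (fun ω => (η₀ ω) ^ 2) μ μ := by
    intro i
    exact (hid i).comp (measurable_id.pow_const 2)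
  have hsqint : ∀ i : Fin M × Fin b, Integrable (fun ω => (η i ω) ^ 2) μ :=
    fun i => (hsqid i).integrable_iff.mpr hη₀sq
  have hsqvar : ∀ i : Fin M × Fin b, (∫ ω, (η i ω) ^ 2 ∂μ) = σ ^ 2 :=
    fun i => ((hsqid i).integral_eq).trans hvar
  have hXint : ∀ j, Integrable (X j) μ := by
    intro j
    exact (integrable_finset_sum _ fun i _ => hsqint (j, i)).const_mul _
  have hXnonneg : ∀ j ω, 0 ≤ X j ω := by
    intro j ω
    exact mul_nonneg (by positivity) (Finset.sum_nonneg fun i _ => sq_nonneg _)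
  -- the bad-set probability bound
  have hbad : ∀ j, (μ {ω | ¬ (X j ω ≤ 4 * σ ^ 2)}).toReal ≤ 1/4 := by
    intro j
    rcases Nat.eq_zero_or_pos b with hb | hb
    · have : {ω | ¬ (X j ω ≤ 4 * σ ^ 2)} = ∅ := by
        ext ω
        simp only [Set.mem_setOf_eq, Set.mem_empty_iff_false, iff_false, not_not]
        subst hb
        simp only [hX, Finset.univ_eq_empty, Finset.sum_empty, mul_zero]
        positivity
      rw [this]
      simp
    · have hEX : (∫ ω, X j ω ∂μ) = σ ^ 2 := by
        simp only [hX]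
        rw [integral_const_mul, integral_finset_sum _ fun i _ => hsqint (j, i)]
        simp only [hsqvar]
        rw [Finset.sum_const, Finset.card_univ, Fintype.card_fin, nsmul_eq_mul]
        field_simp
      rcases eq_or_lt_of_le hσ2 with hσ0 | hσpos
      · -- σ² = 0 : X j = 0 a.e.
        have hae : (fun ω => X j ω) =ᵐ[μ] 0 := by
          refine (integral_eq_zero_iff_of_nonneg (fun ω => hXnonneg j ω) (hXint j)).mp ?_
          rw [hEX, ← hσ0]
        have hnull : μ {ω | ¬ (X j ω ≤ 4 * σ ^ 2)} = 0 := by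
          refine measure_mono_null ?_ (ae_iff.mp hae)
          intro ω hω
          simp only [Set.mem_setOf_eq] at hω ⊢
          intro h0'
          apply hω
          rw [h0']
          positivity
        rw [hnull]
        simp
      · -- Markov
        have hmarkov := mul_meas_ge_le_integral_of_nonneg
          (Filter.Eventually.of_forall (fun ω => hXnonneg j ω)) (hXint j) (4 * σ ^ 2)
        rw [hEX, measureReal_def] at hmarkov
        have hsubset : {ω | ¬ (X j ω ≤ 4 * σ ^ 2)} ⊆ {ω | 4 * σ ^ 2 ≤ X j ω} := by
          intro ω hω
          simp only [Set.mem_setOf_eq] at hω ⊢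
          linarith [lt_of_not_ge hω]
        have hmono : (μ {ω | ¬ (X j ω ≤ 4 * σ ^ 2)}).toReal
            ≤ (μ {ω | 4 * σ ^ 2 ≤ X j ω}).toReal :=
          ENNReal.toReal_mono (measure_ne_top μ _) (measure_mono hsubset)
        have h4 : (0:ℝ) < 4 * σ ^ 2 := by linarith
        nlinarith [hmono, hmarkov, ENNReal.toReal_nonneg
          (a := μ {ω | ¬ (X j ω ≤ 4 * σ ^ 2)})]
  -- Part 2 : Chernoff bound
  set mS : Fin M → MeasurableSpace Ω :=
    fun j => ⨆ i : Fin b, MeasurableSpace.comap (η (j, i)) inferInstance with hmS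
  have hηmS : ∀ (j : Fin M) (i : Fin b), Measurable[mS j] (η (j, i)) := by
    intro j i
    exact measurable_iff_comap_le.mpr
      (le_iSup (fun i => MeasurableSpace.comap (η (j, i)) inferInstance) i)
  have hXmS : ∀ j, Measurable[mS j] (X j) := by
    intro j
    exact measurable_const.mul (Finset.measurable_sum _ fun i _ => (hηmS j i).pow_const 2)
  have hYmS : ∀ j, Measurable[mS j] (Y j) := by
    intro j
    exact Measurable.ite (measurableSet_le (hXmS j) measurable_const)
      measurable_const measurable_const
  have hfe : ∀ s : Finset (Fin M), (∑ j' ∈ s, Y j') = fun ω => ∑ j' ∈ s, Y j' ω :=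
    fun s => funext fun ω => by simp
  have hIndep' : iIndep (fun p : Fin M × Fin b =>
      MeasurableSpace.comap (η p) inferInstance) μ := hηindep
  have hblock : ∀ (j : Fin M) (s : Finset (Fin M)), j ∉ s →
      IndepFun (Y j) (∑ j' ∈ s, Y j') μ := by
    intro j s hj
    have hdisj : Disjoint (Prod.fst ⁻¹' {j} : Set (Fin M × Fin b)) (Prod.fst ⁻¹' (↑s)) :=
      (Set.disjoint_singleton_left.mpr (by simpa using hj)).preimage Prod.fst
    have h1 := indep_iSup_of_disjoint
      (m := fun p : Fin M × Fin b => MeasurableSpace.comap (η p) inferInstance)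
      (fun p => (hη p).comap_le) hIndep' hdisj
    have hle1 : mS j ≤ ⨆ p ∈ (Prod.fst ⁻¹' {j} : Set (Fin M × Fin b)),
        MeasurableSpace.comap (η p) inferInstance := by
      refine iSup_le fun i => ?_
      exact le_iSup₂ (f := fun p (_ : p ∈ (Prod.fst ⁻¹' {j} : Set (Fin M × Fin b))) =>
        MeasurableSpace.comap (η p) inferInstance) (j, i) rfl
    have hle2 : (⨆ j' ∈ s, mS j') ≤ ⨆ p ∈ (Prod.fst ⁻¹' (↑s) : Set (Fin M × Fin b)),
        MeasurableSpace.comap (η p) inferInstance := by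
      refine iSup₂_le fun j' hj' => iSup_le fun i => ?_
      exact le_iSup₂ (f := fun p (_ : p ∈ (Prod.fst ⁻¹' (↑s) : Set (Fin M × Fin b))) =>
        MeasurableSpace.comap (η p) inferInstance) (j', i) hj'
    have hIndepS : Indep (mS j) (⨆ j' ∈ s, mS j') μ :=
      indep_of_indep_of_le_left (indep_of_indep_of_le_right h1 hle2) hle1
    have hYsum : Measurable[⨆ j' ∈ s, mS j'] (∑ j' ∈ s, Y j') := by
      rw [hfe s]
      refine Finset.measurable_sum s fun j' hj' => ?_
      exact (hYmS j').mono (le_iSup₂ (f := fun j'' (_ : j'' ∈ s) => mS j'') j' hj') le_rfl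
    exact indep_of_indep_of_le_left
      (indep_of_indep_of_le_right hIndepS (measurable_iff_comap_le.mp hYsum))
      (measurable_iff_comap_le.mp (hYmS j))
  set t : ℝ := Real.log 4 with ht
  have ht0 : 0 ≤ t := Real.log_nonneg (by norm_num)
  have hmgf_sum : ∀ s : Finset (Fin M), mgf (∑ j ∈ s, Y j) μ t = ∏ j ∈ s, mgf (Y j) μ t := by
    intro s
    refine Finset.induction_on s ?_ ?_
    · simp [mgf_zero_fun]
    · intro j s' hj ih
      rw [Finset.sum_insert hj,
        IndepFun.mgf_add (hblock j s' hj)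
          (((hYmeas j).const_mul t).exp.aestronglyMeasurable)
          (by rw [hfe s']
              exact ((Finset.measurable_sum s' fun j' _ => hYmeas j').const_mul
                t).exp.aestronglyMeasurable),
        ih, Finset.prod_insert hj]
  have hYind : ∀ j, Y j = Set.indicator {ω | ¬ (X j ω ≤ 4 * σ ^ 2)} (fun _ => (1:ℝ)) := by
    intro j
    funext ω
    simp only [hY, Set.indicator_apply, Set.mem_setOf_eq]
    by_cases h : X j ω ≤ 4 * σ ^ 2 <;> simp [h]
  have hmgfY : ∀ j, mgf (Y j) μ t ≤ 7/4 := by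
    intro j
    have hexp : (fun ω => rexp (t * Y j ω)) = fun ω => 1 + 3 * Y j ω := by
      funext ω
      by_cases h : X j ω ≤ 4 * σ ^ 2
      · simp [hY, h]
      · simp only [hY, if_neg h]
        rw [mul_one, ht, Real.exp_log (by norm_num)]
        norm_num
    have hYint : Integrable (Y j) μ := by
      rw [hYind j]
      exact (integrable_const 1).indicator (hbadmeas j)
    have hEY : ∫ ω, Y j ω ∂μ = (μ {ω | ¬ (X j ω ≤ 4 * σ ^ 2)}).toReal := by
      rw [hYind j, integral_indicator_const (1:ℝ) (hbadmeas j)]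
      simp
      rfl
    have hmgf : mgf (Y j) μ t = ∫ ω, rexp (t * Y j ω) ∂μ := rfl
    rw [hmgf, hexp, integral_add (integrable_const 1) (hYint.const_mul 3),
      integral_const, integral_const_mul, hEY]
    have := hbad j
    simp only [measureReal_def, measure_univ, ENNReal.toReal_one, smul_eq_mul, mul_one]
    linarith
  set W : Ω → ℝ := ∑ j : Fin M, Y j with hW
  have hWfun : ∀ ω, W ω = ∑ j, Y j ω := fun ω => by simp [hW]
  have hYle : ∀ j ω, 0 ≤ Y j ω ∧ Y j ω ≤ 1 := by
    intro j ω
    simp only [hY]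
    by_cases h : X j ω ≤ 4 * σ ^ 2 <;> simp [h]
  have hWmeas : Measurable W := by
    rw [hW, hfe Finset.univ]
    exact Finset.measurable_sum _ fun j _ => hYmeas j
  have hWint : Integrable (fun ω => rexp (t * W ω)) μ := by
    refine ⟨((hWmeas.const_mul t).exp).aestronglyMeasurable, ?_⟩
    refine HasFiniteIntegral.of_bounded (C := rexp (t * M)) (Filter.Eventually.of_forall ?_)
    intro ω
    rw [Real.norm_eq_abs, Real.abs_exp]
    apply Real.exp_le_exp.mpr
    refine mul_le_mul_of_nonneg_left ?_ ht0
    rw [hWfun]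
    calc ∑ j, Y j ω ≤ ∑ _j : Fin M, (1:ℝ) := Finset.sum_le_sum fun j _ => (hYle j ω).2
      _ = M := by simp
  have hchern := measure_ge_le_exp_mul_mgf (X := W) (μ := μ) ((M:ℝ)/2) ht0 hWint
  have hprod : mgf W μ t ≤ (7/4:ℝ)^M := by
    rw [hW, hmgf_sum Finset.univ]
    calc ∏ j, mgf (Y j) μ t ≤ ∏ _j : Fin M, (7/4:ℝ) :=
          Finset.prod_le_prod (fun j _ => mgf_nonneg) (fun j _ => hmgfY j)
      _ = (7/4:ℝ)^M := by simp [div_pow]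
  have hfail : (μ {ω | (M:ℝ)/2 ≤ W ω}).toReal ≤ rexp (-(c * M)) := by
    refine le_trans hchern ?_
    have h74 : ((7:ℝ)/4)^M = rexp ((M:ℝ) * Real.log (7/4)) := by
      rw [Real.exp_nat_mul, Real.exp_log (by norm_num)]
    calc rexp (-t * ((M:ℝ)/2)) * mgf W μ t ≤ rexp (-t * ((M:ℝ)/2)) * (7/4:ℝ)^M := by
          exact mul_le_mul_of_nonneg_left hprod (Real.exp_nonneg _)
      _ = rexp (-t * ((M:ℝ)/2) + (M:ℝ) * Real.log (7/4)) := by rw [h74, ← Real.exp_add]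
      _ = rexp (-(c * M)) := by
          congr 1
          rw [ht, hc]
          have l4 : Real.log 4 = 2 * Real.log 2 := by
            rw [show (4:ℝ) = 2^2 by norm_num, Real.log_pow]; push_cast; ring
          have l74 : Real.log (7/4) = Real.log 7 - 2 * Real.log 2 := by
            rw [Real.log_div (by norm_num) (by norm_num), l4]
          have l87 : Real.log (8/7) = 3 * Real.log 2 - Real.log 7 := by
            rw [Real.log_div (by norm_num) (by norm_num),
              show (8:ℝ) = 2^3 by norm_num, Real.log_pow]
            push_cast; ring
          rw [l4, l74, l87]; ring
  have hcover : ∀ ω, ω ∉ E → ω ∈ {ω | (M:ℝ)/2 ≤ W ω} := by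
    intro ω hω
    simp only [hE, Set.mem_setOf_eq, not_le] at hω
    have hbadcard : (∑ j, Y j ω)
        = ((Finset.univ.filter (fun j => ¬ (X j ω ≤ 4 * σ ^ 2))).card : ℝ) := by
      rw [Finset.card_filter]
      push_cast
      refine Finset.sum_congr rfl fun j _ => ?_
      by_cases h : X j ω ≤ 4 * σ ^ 2 <;> simp [hY, h]
    have hsumcard := Finset.card_filter_add_card_filter_not
      (s := (Finset.univ : Finset (Fin M))) (fun j => X j ω ≤ 4 * σ ^ 2)
    simp only [Finset.card_univ, Fintype.card_fin] at hsumcard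
    show (M:ℝ)/2 ≤ W ω
    rw [hWfun, hbadcard]
    have hnat : M + 1 ≤ 2 * (Finset.univ.filter (fun j => ¬ (X j ω ≤ 4 * σ ^ 2))).card := by
      omega
    have hr := (Nat.cast_le (α := ℝ)).mpr hnat
    push_cast at hr
    linarith
  have h1 : (1:ENNReal) ≤ μ T + ENNReal.ofReal (rexp (-(c * M))) := by
    have hU : (Set.univ : Set Ω) ⊆ T ∪ {ω | (M:ℝ)/2 ≤ W ω} := by
      intro ω _
      by_cases hω : ω ∈ E
      · exact Or.inl (hsub hω)
      · exact Or.inr (hcover ω hω)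
    calc (1:ENNReal) = μ Set.univ := measure_univ.symm
      _ ≤ μ (T ∪ {ω | (M:ℝ)/2 ≤ W ω}) := measure_mono hU
      _ ≤ μ T + μ {ω | (M:ℝ)/2 ≤ W ω} := measure_union_le _ _
      _ ≤ μ T + ENNReal.ofReal (rexp (-(c * M))) := by
          gcongr
          rw [← ENNReal.ofReal_toReal (measure_ne_top μ {ω | (M:ℝ)/2 ≤ W ω})]
          exact ENNReal.ofReal_le_ofReal hfail
  exact tsub_le_iff_right.mpr h1


end
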